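/- Let n, k, q be integers with 1 ≤ k ≤ n − 1. Let θ > 0 and ϖ(1), …, ϖ(q) > 0 be real numbers such that ϖ(j)·θ ≤ 1 for all j, q − 2(n−1) + k − 1 = θ·(Σⱼϖ(j) − (k+1)), and θ ≤ (2n−k−1)/(k+1). Let η(1), …, η(q) ≥ 0 be reals with Σⱼ(1 − η(j)) > (2n−k−1)·(k/2 + 1). Then Σⱼ ϖ(j)(1 − η(j)) − (k+1)(k/2 + 1) ≥ ((k+1)/(2n−k−1))·(Σⱼ(1 − η(j)) − (2n−k−1)(k/2+1)) > 0. -/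
import Mathlib


/-- Key arithmetic estimate in the proof of the modified defect relation:
if `1 ≤ k ≤ n − 1`, `ϖ(j)θ ≤ 1`, `q − 2(n−1) + k − 1 = θ(Σϖ(j) − (k+1))`,
`θ ≤ (2n−k−1)/(k+1)`, `η(j) ≥ 0`, and `Σ(1 − η(j)) > (2n−k−1)(k/2 + 1)`, then
`Σϖ(j)(1 − η(j)) − (k+1)(k/2+1)
  ≥ ((k+1)/(2n−k−1))·(Σ(1 − η(j)) − (2n−k−1)(k/2+1)) > 0`. -/
theorem defect_relation_arithmetic (n k q : ℕ) (hk : 1 ≤ k) (hkn : k + 1 ≤ n)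
    (θ : ℝ) (hθ : 0 < θ)
    (ϖ : Fin q → ℝ) (hϖpos : ∀ j, 0 < ϖ j) (hϖθ : ∀ j, ϖ j * θ ≤ 1)
    (hsumϖ : (q : ℝ) - 2 * ((n : ℝ) - 1) + k - 1 = θ * (∑ j, ϖ j - (k + 1)))
    (hθle : θ ≤ (2 * (n : ℝ) - k - 1) / ((k : ℝ) + 1))
    (η : Fin q → ℝ) (hη : ∀ j, 0 ≤ η j)
    (hsumη : (2 * (n : ℝ) - k - 1) * ((k : ℝ) / 2 + 1) < ∑ j, (1 - η j)) :
    ∑ j, ϖ j * (1 - η j) - ((k : ℝ) + 1) * ((k : ℝ) / 2 + 1)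
        ≥ (((k : ℝ) + 1) / (2 * (n : ℝ) - k - 1)) *
            (∑ j, (1 - η j) - (2 * (n : ℝ) - k - 1) * ((k : ℝ) / 2 + 1))
      ∧ 0 < (((k : ℝ) + 1) / (2 * (n : ℝ) - k - 1)) *
            (∑ j, (1 - η j) - (2 * (n : ℝ) - k - 1) * ((k : ℝ) / 2 + 1)) := by
  have hk1 : (1 : ℝ) ≤ (k : ℝ) := by exact_mod_cast hk
  have hkn' : (k : ℝ) + 1 ≤ (n : ℝ) := by exact_mod_cast hkn
  set A : ℝ := 2 * (n : ℝ) - k - 1 with hAdef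
  have hA : 0 < A := by simp only [hAdef]; linarith
  set S : ℝ := ∑ j, (1 - η j) with hSdef
  -- S = q - ∑ η
  have hS : S = (q : ℝ) - ∑ j, η j := by
    simp [hSdef, Finset.sum_sub_distrib]
  -- sum of weights
  have hθne : θ ≠ 0 := ne_of_gt hθ
  have hsumw : ∑ j, ϖ j = ((q : ℝ) - 2 * ((n : ℝ) - 1) + k - 1) / θ + (k + 1) := by
    field_simp
    linarith [hsumϖ]
  -- each ϖ j * η j ≤ η j / θ
  have hbound : ∑ j, ϖ j * η j ≤ (∑ j, η j) / θ := by
    rw [Finset.sum_div]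
    apply Finset.sum_le_sum
    intro j _
    have hj : ϖ j ≤ 1 / θ := by
      rw [le_div_iff₀ hθ]; exact hϖθ j
    rw [div_eq_mul_one_div]
    calc ϖ j * η j ≤ (1 / θ) * η j :=
          mul_le_mul_of_nonneg_right hj (hη j)
      _ = η j * (1 / θ) := mul_comm _ _
  -- key lower bound
  have hkey : ∑ j, ϖ j * (1 - η j) ≥ (1 / θ) * (S - A) + (k + 1) := by
    have hexp : ∑ j, ϖ j * (1 - η j) = ∑ j, ϖ j - ∑ j, ϖ j * η j := by
      rw [← Finset.sum_sub_distrib]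
      congr 1; ext j; ring
    rw [hexp, hsumw, hS]
    rw [ge_iff_le]
    have e : ((q : ℝ) - 2 * ((n : ℝ) - 1) + k - 1) / θ
        = (1 / θ) * (((q : ℝ) - ∑ j, η j) - A) + (1 / θ) * (∑ j, η j) := by
      rw [hAdef]; field_simp; ring
    rw [e]
    have hb : ∑ j, ϖ j * η j ≤ (1 / θ) * ∑ j, η j := by
      rw [one_div, ← div_eq_inv_mul]; exact hbound
    linarith
  -- S - A > 0
  have hSA : 0 < S - A := by
    have : A ≤ A * ((k : ℝ) / 2 + 1) := by nlinarith
    linarith [hsumη]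
  -- (k+1)/A ≤ 1/θ
  have hinv : ((k : ℝ) + 1) / A ≤ 1 / θ := by
    rw [div_le_div_iff₀ hA hθ]
    have := (le_div_iff₀ (by linarith : (0:ℝ) < (k:ℝ)+1)).mp hθle
    linarith
  have hmain : (((k : ℝ) + 1) / A) * (S - A) ≤ (1 / θ) * (S - A) :=
    mul_le_mul_of_nonneg_right hinv (le_of_lt hSA)
  constructor
  · have h1 : (((k : ℝ) + 1) / A) * (S - A * ((k : ℝ) / 2 + 1))
        = (((k : ℝ) + 1) / A) * (S - A) - (((k : ℝ) + 1) / A) * A * ((k : ℝ)/2 + 1)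
          + (((k : ℝ) + 1) / A) * A := by ring
    have h2 : (((k : ℝ) + 1) / A) * A = (k : ℝ) + 1 := by
      field_simp
    rw [h1, h2]
    linarith [hkey, hmain]
  · apply mul_pos (div_pos (by linarith) hA)
    linarith [hsumη]
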